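/- Let A be a graded algebra equipped with an operator d: A_n → A_{n+1} such that d∘d = 0 and d is a derivation of the product. Then A equipped with the derived bracket [a,b]_d := (−1)^{|a|+1}[da, b], where [x,y] = xy − (−1)^{|x||y|}yx is the graded commutator, is a generalized Loday-Gerstenhaber algebra: the bracket [−,−]_d has degree 1, satisfies the graded Leibniz (Jacobi) identity [a,[b,c]_d]_d = [[a,b]_d,c]_d + (−1)^{(|a|+1)(|b|+1)}[b,[a,c]_d]_d, and satisfies the Poisson relation [a,bc]_d = [a,b]_d c + (−1)^{(|a|+1)|b|} b[a,c]_d. -/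
import Mathlib


/-!
Statement 17 (Menichi, Proposition `Gerstenhaber algebra associe a une dga`):

Let `A` be a graded algebra equipped with an operator `d : A_n → A_{n+1}` such
that `d ∘ d = 0` and `d` is a derivation of the product.  Then `A` equipped
with the derived bracket `[a,b]_d := (-1)^{|a|+1}[d a, b]` (graded commutator)
is a generalized Loday-Gerstenhaber algebra: the bracket has degree `1`,
satisfies the graded Leibniz (Jacobi) identity and the Poisson relation.

Graded algebras are modeled as internally `ℤ`-graded `k`-algebras; homogeneous
elements carry explicit degrees and Koszul signs use `Int.negOnePow`.
-/

/-- `(-1)^n` as an integer, for `n : ℤ`. -/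
def sgn (n : ℤ) : ℤ := (Int.negOnePow n : ℤˣ)


lemma sgn_eval (n : ℤ) : sgn n = if Even n then 1 else -1 := by
  rcases Int.even_or_odd n with h | h
  · simp [sgn, Int.negOnePow_even _ h, h]
  · rw [sgn, Int.negOnePow_odd _ h, if_neg (Int.not_even_iff_odd.2 h)]; simp

variable {k : Type*} [CommRing k] {A : Type*} [Ring A] [Algebra k A]

/-- The derived bracket `[a,b]_d = (-1)^{|a|+1} [d a, b]`, for `a` of degree
`i` and `b` of degree `j`, where `[x,y] = xy - (-1)^{|x||y|} yx` is the graded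
commutator (here `d a` has degree `i + 1`). -/
def derivedBracket (d : A →ₗ[k] A) (i j : ℤ) (a b : A) : A :=
  sgn (i + 1) • (d a * b - sgn ((i + 1) * j) • (b * d a))

/-- **Statement 17.** If `d` is a square-zero degree `+1` derivation of a
`ℤ`-graded algebra `A`, then the derived bracket `[a,b]_d = (-1)^{|a|+1}[da,b]`
makes `A` a generalized Loday-Gerstenhaber algebra: the bracket raises total
degree by `1`, satisfies the graded Leibniz/Jacobi identity
`[a,[b,c]_d]_d = [[a,b]_d,c]_d + (-1)^{(|a|+1)(|b|+1)} [b,[a,c]_d]_d`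
and the Poisson relation
`[a,bc]_d = [a,b]_d c + (-1)^{(|a|+1)|b|} b [a,c]_d`. -/
theorem statement17
    (𝒜 : ℤ → Submodule k A) [GradedRing 𝒜]
    (d : A →ₗ[k] A)
    (hd_mem : ∀ ⦃i : ℤ⦄ ⦃a : A⦄, a ∈ 𝒜 i → d a ∈ 𝒜 (i + 1))
    (hdd : d ∘ₗ d = 0)
    (hLeibniz : ∀ ⦃i : ℤ⦄ ⦃a : A⦄ (b : A), a ∈ 𝒜 i →
      d (a * b) = d a * b + sgn i • (a * d b)) :
    -- degree 1:
    (∀ ⦃i j : ℤ⦄ ⦃a b : A⦄, a ∈ 𝒜 i → b ∈ 𝒜 j →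
        derivedBracket d i j a b ∈ 𝒜 (i + j + 1)) ∧
    -- graded Leibniz (Jacobi) identity:
    (∀ ⦃i j l : ℤ⦄ ⦃a b c : A⦄, a ∈ 𝒜 i → b ∈ 𝒜 j → c ∈ 𝒜 l →
        derivedBracket d i (j + l + 1) a (derivedBracket d j l b c) =
          derivedBracket d (i + j + 1) l (derivedBracket d i j a b) c +
            sgn ((i + 1) * (j + 1)) •
              derivedBracket d j (i + l + 1) b (derivedBracket d i l a c)) ∧
    -- Poisson relation:
    (∀ ⦃i j l : ℤ⦄ ⦃a b c : A⦄, a ∈ 𝒜 i → b ∈ 𝒜 j → c ∈ 𝒜 l →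
        derivedBracket d i (j + l) a (b * c) =
          derivedBracket d i j a b * c +
            sgn ((i + 1) * j) • (b * derivedBracket d i l a c)) := by
  refine ⟨?_, ?_, ?_⟩
  · -- degree 1
    intro i j a b ha hb
    have h1 : d a * b ∈ 𝒜 (i + j + 1) := by
      have := SetLike.mul_mem_graded (hd_mem ha) hb
      rwa [show i + 1 + j = i + j + 1 by ring] at this
    have h2 : b * d a ∈ 𝒜 (i + j + 1) := by
      have := SetLike.mul_mem_graded hb (hd_mem ha)
      rwa [show j + (i + 1) = i + j + 1 by ring] at this
    rw [derivedBracket]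
    exact zsmul_mem (sub_mem h1 (zsmul_mem h2 _)) _
  · -- Jacobi
    intro i j l a b c ha hb hc
    have hda : d (d a) = 0 := by
      have := LinearMap.congr_fun hdd a; simpa using this
    simp only [derivedBracket, map_zsmul, map_sub, hLeibniz b (hd_mem ha),
      hLeibniz (d a) hb, hda, zero_mul, mul_zero, smul_zero, add_zero, zero_add,
      smul_sub, smul_add, smul_smul, sub_mul, mul_sub, add_mul, mul_add,
      smul_mul_assoc, mul_smul_comm, mul_assoc, sub_zero]
    rcases (Int.even_or_odd i).imp id Int.not_even_iff_odd.mpr with hi | hi <;>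
    rcases (Int.even_or_odd j).imp id Int.not_even_iff_odd.mpr with hj | hj <;>
    rcases (Int.even_or_odd l).imp id Int.not_even_iff_odd.mpr with hl | hl <;>
    · simp only [sgn_eval, Int.even_add, Int.even_mul, hi, hj, hl]
      norm_num
      try abel
  · -- Poisson
    intro i j l a b c ha hb hc
    simp only [derivedBracket, smul_sub, smul_smul, sub_mul, mul_sub, smul_mul_assoc,
      mul_smul_comm, mul_assoc]
    rcases (Int.even_or_odd i).imp id Int.not_even_iff_odd.mpr with hi | hi <;>
    rcases (Int.even_or_odd j).imp id Int.not_even_iff_odd.mpr with hj | hj <;>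
    rcases (Int.even_or_odd l).imp id Int.not_even_iff_odd.mpr with hl | hl <;>
    · simp only [sgn_eval, Int.even_add, Int.even_mul, hi, hj, hl]
      norm_num
      try abel
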